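/- Let 𝔱 be a finite-dimensional real inner product space, β¹,…,β^m ∈ 𝔱*, and let sequences ξ_n ∈ 𝔱 and bounded sequences (v_n^i) ∈ ℂ be given. Suppose A := { i : exp(-2β^i(ξ_n))|v_n^i|² is unbounded } is nonempty and for all i ∈ A, exp(-2β^i(ξ_n))|v_n^i|² → +∞. Then β^i(ξ_n) → -∞ for every i ∈ A, and consequently there exists a unit vector η ∈ 𝔱 with β^i(η) < 0 for all i ∈ A. -/

import Mathlib

/-!
STATEMENT 14: Let `𝔱` be a finite-dimensional real inner product space,
`β¹, …, β^m ∈ 𝔱*`, `ξ_n ∈ 𝔱` a sequence and `(v_n^i)` bounded sequences of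
complex numbers. If `A = { i | exp (-2 β^i(ξ_n)) |v_n^i|² is unbounded }` is
nonempty and for all `i ∈ A` the sequence `exp (-2 β^i(ξ_n)) |v_n^i|²` tends
to `+∞`, then `β^i(ξ_n) → -∞` for every `i ∈ A`, and there exists a unit
vector `η ∈ 𝔱` with `β^i(η) < 0` for all `i ∈ A`.
-/

open Filter

theorem statement14
    (𝔱 : Type*) [NormedAddCommGroup 𝔱] [InnerProductSpace ℝ 𝔱] [FiniteDimensional ℝ 𝔱]
    (m : ℕ) (β : Fin m → (𝔱 →ₗ[ℝ] ℝ))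
    (ξ : ℕ → 𝔱) (v : Fin m → ℕ → ℂ)
    (hbdd : ∀ i, ∃ C : ℝ, ∀ n, ‖v i n‖ ≤ C)
    (A : Set (Fin m))
    (hA : A = { i | ¬ BddAbove (Set.range fun n =>
        Real.exp (-2 * β i (ξ n)) * ‖v i n‖ ^ 2) })
    (hAne : A.Nonempty)
    (hAtop : ∀ i ∈ A, Tendsto (fun n =>
        Real.exp (-2 * β i (ξ n)) * ‖v i n‖ ^ 2) atTop atTop) :
    (∀ i ∈ A, Tendsto (fun n => β i (ξ n)) atTop atBot)
    ∧ (∃ η : 𝔱, ‖η‖ = 1 ∧ ∀ i ∈ A, β i η < 0) := by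
  have key : ∀ i ∈ A, Tendsto (fun n => β i (ξ n)) atTop atBot := by
    intro i hi
    obtain ⟨C, hC⟩ := hbdd i
    set D : ℝ := max (C ^ 2) 1 with hD
    have hDpos : 0 < D := lt_of_lt_of_le one_pos (le_max_right _ _)
    have hle : ∀ n, Real.exp (-2 * β i (ξ n)) * ‖v i n‖ ^ 2 / D ≤
        Real.exp (-2 * β i (ξ n)) := by
      intro n
      rw [div_le_iff₀ hDpos]
      have h1 : ‖v i n‖ ^ 2 ≤ D := by
        refine le_trans ?_ (le_max_left _ _)
        exact pow_le_pow_left₀ (norm_nonneg _) (hC n) 2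
      exact mul_le_mul_of_nonneg_left h1 (Real.exp_nonneg _)
    have hexp : Tendsto (fun n => Real.exp (-2 * β i (ξ n))) atTop atTop :=
      tendsto_atTop_mono hle ((hAtop i hi).atTop_div_const hDpos)
    have h2 : Tendsto (fun n => -2 * β i (ξ n)) atTop atTop :=
      Real.tendsto_exp_comp_atTop.mp hexp
    have h3 : Tendsto (fun n => (-1/2 : ℝ) * (-2 * β i (ξ n))) atTop atBot :=
      h2.const_mul_atTop_of_neg (by norm_num)
    have heq : (fun n => (-1/2 : ℝ) * (-2 * β i (ξ n))) = fun n => β i (ξ n) := by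
      funext n; ring
    rwa [heq] at h3
  refine ⟨key, ?_⟩
  have hfin : A.Finite := Set.toFinite A
  have hev : ∀ᶠ n in atTop, ∀ i ∈ A, β i (ξ n) < 0 := by
    rw [Set.Finite.eventually_all hfin]
    intro i hi
    exact (key i hi).eventually (eventually_lt_atBot 0)
  obtain ⟨n, hn⟩ := hev.exists
  obtain ⟨i0, hi0⟩ := hAne
  have hne : ξ n ≠ 0 := by
    intro h
    have := hn i0 hi0
    rw [h, map_zero] at this
    exact lt_irrefl 0 this
  have hnorm : (0:ℝ) < ‖ξ n‖ := norm_pos_iff.mpr hne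
  refine ⟨‖ξ n‖⁻¹ • ξ n, ?_, ?_⟩
  · rw [norm_smul, norm_inv, norm_norm, inv_mul_cancel₀ (ne_of_gt hnorm)]
  · intro i hi
    rw [map_smul, smul_eq_mul]
    exact mul_neg_of_pos_of_neg (inv_pos.mpr hnorm) (hn i hi)
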